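/- Let $F(t) = 1 - |1 + \sum_{j=1}^r q_j (e^{2\pi i t_j} - 1)|^2$ where $q_j > 0$ and $\sum_{j=1}^r q_j < 1$. Then there exists $c > 0$ such that $F(t) \geq c \|t\|^2$ for all $t$ with $-1/2 \leq t_j < 1/2$ for each $j$. In particular $F(t) \geq 0$ with equality only at $t = 0$. -/

import Mathlib

open Real

lemma onecos_lb (t : ℝ) (h1 : -(1/2) ≤ t) (h2 : t < 1/2) :
    8 * t ^ 2 ≤ 1 - Real.cos (2 * π * t) := by
  have habs : |t| ≤ 1/2 := abs_le.2 ⟨by linarith, le_of_lt h2⟩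
  have hc : Real.cos (2 * π * t) = Real.cos (2 * (π * |t|)) := by
    rcases abs_cases t with ⟨h, _⟩ | ⟨h, _⟩
    · rw [h]; ring_nf
    · rw [h]; rw [show 2 * (π * -t) = -(2*π*t) by ring, Real.cos_neg]
  rw [hc, Real.cos_two_mul']
  have hs : 2 * |t| ≤ Real.sin (π * |t|) := by
    have := Real.mul_le_sin (x := π * |t|) (by positivity)
      (by nlinarith [Real.pi_pos])
    calc 2 * |t| = 2 / π * (π * |t|) := by field_simp
      _ ≤ _ := this
  have hs2 : (2 * |t|) ^ 2 ≤ Real.sin (π * |t|) ^ 2 := by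
    apply sq_le_sq' <;> nlinarith [abs_nonneg t]
  have := Real.sin_sq_add_cos_sq (π * |t|)
  have ht2 : (2*|t|)^2 = 4 * t^2 := by rw [mul_pow, sq_abs]; ring
  nlinarith [Real.cos_sq_le_one (π * |t|)]

lemma habs_eq (r : ℕ) (q t : Fin r → ℝ) :
    ‖1 + ∑ j, (q j : ℂ) * (Complex.exp (2 * π * Complex.I * (t j)) - 1)‖ ^ 2
    = (1 - ∑ j, q j * (1 - Real.cos (2*π*t j)))^2 + (∑ j, q j * Real.sin (2*π*t j))^2 := by
  have hexp : ∀ j : Fin r, 2*(π:ℂ)*Complex.I*(t j) = ((2*π*(t j) : ℝ) : ℂ) * Complex.I := by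
    intro j; push_cast; ring
  simp_rw [hexp]
  rw [Complex.sq_norm, Complex.normSq_apply]
  have hterm_re : ∀ j : Fin r, ((q j:ℂ)*(Complex.exp (((2*π*(t j) : ℝ) : ℂ) * Complex.I) - 1)).re
      = -(q j * (1 - Real.cos (2*π*t j))) := by
    intro j
    rw [Complex.mul_re, Complex.sub_re, Complex.sub_im, Complex.exp_ofReal_mul_I_re,
      Complex.exp_ofReal_mul_I_im]
    simp; ring
  have hterm_im : ∀ j : Fin r, ((q j:ℂ)*(Complex.exp (((2*π*(t j) : ℝ) : ℂ) * Complex.I) - 1)).im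
      = q j * Real.sin (2*π*t j) := by
    intro j
    rw [Complex.mul_im, Complex.sub_re, Complex.sub_im, Complex.exp_ofReal_mul_I_re,
      Complex.exp_ofReal_mul_I_im]
    simp
  have hre : (1 + ∑ j, (q j:ℂ)*(Complex.exp (((2*π*(t j) : ℝ) : ℂ) * Complex.I) - 1)).re
      = 1 - ∑ j, q j*(1-Real.cos (2*π*t j)) := by
    rw [Complex.add_re, Complex.re_sum, Complex.one_re]
    simp_rw [hterm_re, Finset.sum_neg_distrib]
    ring
  have him : (1 + ∑ j, (q j:ℂ)*(Complex.exp (((2*π*(t j) : ℝ) : ℂ) * Complex.I) - 1)).im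
      = ∑ j, q j*(Real.sin (2*π*t j)) := by
    rw [Complex.add_im, Complex.im_sum, Complex.one_im]
    simp_rw [hterm_im]
    ring
  rw [hre, him]; ring

lemma key_ineq (r : ℕ) (q : Fin r → ℝ) (hq : ∀ j, 0 ≤ q j) (θ : Fin r → ℝ) :
    (1 - ∑ j, q j * (1 - Real.cos (θ j)))^2 + (∑ j, q j * Real.sin (θ j))^2
    ≤ 1 - 2*(1 - ∑ j, q j) * ∑ j, q j * (1 - Real.cos (θ j)) := by
  have cauchy_wt : ∀ x : Fin r → ℝ,
      (∑ j, q j * x j) ^ 2 ≤ (∑ j, q j) * ∑ j, q j * x j ^ 2 := by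
    intro x
    have h := Finset.sum_mul_sq_le_sq_mul_sq Finset.univ
      (fun j => Real.sqrt (q j)) (fun j => Real.sqrt (q j) * x j)
    have e1 : ∀ j : Fin r, Real.sqrt (q j) * (Real.sqrt (q j) * x j) = q j * x j := by
      intro j; rw [← mul_assoc, Real.mul_self_sqrt (hq j)]
    have e2 : ∀ j : Fin r, Real.sqrt (q j) ^ 2 = q j := fun j => Real.sq_sqrt (hq j)
    have e3 : ∀ j : Fin r, (Real.sqrt (q j) * x j) ^ 2 = q j * x j ^ 2 := by
      intro j; rw [mul_pow, e2]
    calc (∑ j, q j * x j) ^ 2 = (∑ j, Real.sqrt (q j) * (Real.sqrt (q j) * x j)) ^ 2 := by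
          simp_rw [e1]
      _ ≤ (∑ j, Real.sqrt (q j) ^ 2) * ∑ j, (Real.sqrt (q j) * x j) ^ 2 := h
      _ = (∑ j, q j) * ∑ j, q j * x j ^ 2 := by simp_rw [e2, e3]
  have h1 := cauchy_wt (fun j => 1 - Real.cos (θ j))
  have h2 := cauchy_wt (fun j => Real.sin (θ j))
  have h3 : ∑ j, q j * (1 - Real.cos (θ j)) ^ 2 + ∑ j, q j * Real.sin (θ j) ^ 2
      = 2 * ∑ j, q j * (1 - Real.cos (θ j)) := by
    rw [← Finset.sum_add_distrib, Finset.mul_sum]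
    apply Finset.sum_congr rfl
    intro j _
    linear_combination q j * Real.sin_sq_add_cos_sq (θ j)
  have h4 : (∑ j, q j) * (∑ j, q j * (1 - Real.cos (θ j)) ^ 2)
        + (∑ j, q j) * (∑ j, q j * Real.sin (θ j) ^ 2)
      = 2 * (∑ j, q j) * (∑ j, q j * (1 - Real.cos (θ j))) := by
    rw [← mul_add, h3]; ring
  nlinarith [h1, h2, h4]

/-- For `F(t) = 1 - |1 + ∑ q_j (e^{2πi t_j} - 1)|²` with `q_j > 0` and `∑ q_j < 1`, there
is `c > 0` with `F(t) ≥ c ‖t‖²` on the cube `[-1/2, 1/2)^r`; in particular `F ≥ 0` with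
equality only at `0`. -/
theorem F_lower_bound
    (r : ℕ) (hr : 1 ≤ r) (q : Fin r → ℝ) (hq : ∀ j, 0 < q j) (hsum : ∑ j, q j < 1) :
    (∃ c : ℝ, 0 < c ∧ ∀ t : Fin r → ℝ, (∀ j, -(1/2) ≤ t j ∧ t j < 1/2) →
      c * ∑ j, (t j) ^ 2 ≤
        1 - ‖1 + ∑ j, (q j : ℂ) * (Complex.exp (2 * π * Complex.I * (t j)) - 1)‖ ^ 2) ∧
    (∀ t : Fin r → ℝ, (∀ j, -(1/2) ≤ t j ∧ t j < 1/2) →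
      0 ≤ 1 - ‖1 + ∑ j, (q j : ℂ) * (Complex.exp (2 * π * Complex.I * (t j)) - 1)‖ ^ 2
      ∧ (1 - ‖1 + ∑ j, (q j : ℂ) * (Complex.exp (2 * π * Complex.I * (t j)) - 1)‖ ^ 2
            = 0 → t = 0)) := by
  have hne : (Finset.univ : Finset (Fin r)).Nonempty := ⟨⟨0, hr⟩, Finset.mem_univ _⟩
  set Q : ℝ := ∑ j, q j with hQ
  set m : ℝ := Finset.univ.inf' hne q with hm
  have hm0 : 0 < m := by
    rw [hm, Finset.lt_inf'_iff]
    exact fun j _ => hq j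
  have hmle : ∀ j, m ≤ q j := fun j => Finset.inf'_le q (Finset.mem_univ j)
  set c : ℝ := 16 * (1 - Q) * m with hc
  have hc0 : 0 < c := by
    have : 0 < 1 - Q := by linarith
    positivity
  have hmain : ∀ t : Fin r → ℝ, (∀ j, -(1/2) ≤ t j ∧ t j < 1/2) →
      c * ∑ j, (t j) ^ 2 ≤
        1 - ‖1 + ∑ j, (q j : ℂ) * (Complex.exp (2 * π * Complex.I * (t j)) - 1)‖ ^ 2 := by
    intro t ht
    rw [habs_eq r q t]
    have hk := key_ineq r q (fun j => (hq j).le) (fun j => 2*π*t j)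
    have hA : 8 * m * ∑ j, (t j)^2 ≤ ∑ j, q j * (1 - Real.cos (2*π*t j)) := by
      rw [Finset.mul_sum]
      apply Finset.sum_le_sum
      intro j _
      have h8 := onecos_lb (t j) (ht j).1 (ht j).2
      nlinarith [sq_nonneg (t j), hmle j, (hq j).le]
    have h5 := mul_le_mul_of_nonneg_left hA (show (0:ℝ) ≤ 2*(1-Q) by linarith)
    nlinarith [hk, h5]
  refine ⟨⟨c, hc0, hmain⟩, ?_⟩
  intro t ht
  have hb := hmain t ht
  have hsq : 0 ≤ ∑ j, (t j)^2 := Finset.sum_nonneg fun j _ => sq_nonneg _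
  constructor
  · nlinarith
  · intro h0
    have hle : c * ∑ j, (t j)^2 ≤ 0 := by linarith
    have hzero : ∑ j, (t j)^2 = 0 := by nlinarith
    funext j
    have := (Finset.sum_eq_zero_iff_of_nonneg (fun j _ => sq_nonneg (t j))).1 hzero j
      (Finset.mem_univ j)
    have : t j = 0 := by nlinarith [this]
    simpa using this
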